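/- Let f ∈ C[x_1,...,x_N] be an irreducible polynomial whose support is not contained in a line, i.e., there exist exponents α_i, α_j, α_k of monomials of f such that α_i - α_j and α_i - α_k are linearly independent. Then the tropical hypersurface Trop Z(f) spans R^N as a linear space, i.e., the linear span of Trop Z(f) equals R^N. -/

import Mathlib

open MvPolynomial

/-- Pairing of an exponent vector with a point of `ℝ^N`. -/
def expDot {N : ℕ} (α : Fin N →₀ ℕ) (u : Fin N → ℝ) : ℝ :=
  ∑ i, (α i : ℝ) * u i

/-- The tropical hypersurface of `f`: the set of `u ∈ ℝ^N` at which the minimum of `α · u` over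
the exponents `α` in the support of `f` is attained at least twice. -/
def tropHypersurface {N : ℕ} (f : MvPolynomial (Fin N) ℂ) : Set (Fin N → ℝ) :=
  {u | ∃ α ∈ f.support, ∃ β ∈ f.support, α ≠ β ∧ expDot α u = expDot β u ∧
    ∀ γ ∈ f.support, expDot α u ≤ expDot γ u}

lemma expDot_add {N : ℕ} (α : Fin N →₀ ℕ) (u v : Fin N → ℝ) :
    expDot α (u + v) = expDot α u + expDot α v := by
  simp [expDot, mul_add, Finset.sum_add_distrib]

lemma expDot_sub {N : ℕ} (α : Fin N →₀ ℕ) (u v : Fin N → ℝ) :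
    expDot α (u - v) = expDot α u - expDot α v := by
  simp [expDot, mul_sub, Finset.sum_sub_distrib]

lemma expDot_smul {N : ℕ} (α : Fin N →₀ ℕ) (c : ℝ) (u : Fin N → ℝ) :
    expDot α (c • u) = c * expDot α u := by
  simp [expDot, Finset.mul_sum, mul_left_comm]

lemma expDot_single {N : ℕ} (α : Fin N →₀ ℕ) (i : Fin N) :
    expDot α (Pi.single i (1:ℝ)) = α i := by
  simp [expDot, Pi.single_apply, Finset.sum_ite_eq']

/-- Key lemma: if the tropical hypersurface is contained in the kernel of `ℓ`,
then a minimizer at one point of the open half-space `{ℓ > 0}` minimizes everywhere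
on that half-space. -/
lemma minimizer_const {N : ℕ} (f : MvPolynomial (Fin N) ℂ)
    (ℓ : (Fin N → ℝ) →ₗ[ℝ] ℝ)
    (htrop : ∀ x ∈ tropHypersurface f, ℓ x = 0)
    {u v : Fin N → ℝ} (hu : 0 < ℓ u) (hv : 0 < ℓ v)
    {α : Fin N →₀ ℕ} (hα : α ∈ f.support)
    (hmin : ∀ γ ∈ f.support, expDot α u ≤ expDot γ u) :
    ∀ γ ∈ f.support, expDot α v ≤ expDot γ v := by
  by_contra h
  push_neg at h
  obtain ⟨γ0, hγ0, hlt⟩ := h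
  set w : ℝ → (Fin N → ℝ) := fun t => u + t • (v - u) with hw
  have hwval : ∀ (β : Fin N →₀ ℕ) (t : ℝ),
      expDot β (w t) = expDot β u + t * (expDot β v - expDot β u) := by
    intro β t
    simp [hw, expDot_add, expDot_smul, expDot_sub]
  have hcont : ∀ β : Fin N →₀ ℕ, Continuous fun t => expDot β (w t) := by
    intro β
    simp only [hwval]
    fun_prop
  set T : Set ℝ := {t | t ∈ Set.Icc (0:ℝ) 1 ∧
      ∀ γ ∈ f.support, expDot α (w t) ≤ expDot γ (w t)} with hT
  have h0T : (0:ℝ) ∈ T := by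
    refine ⟨⟨le_refl _, zero_le_one⟩, ?_⟩
    intro γ hγ
    simpa [hwval] using hmin γ hγ
  have h1T : (1:ℝ) ∉ T := by
    intro h1
    have := h1.2 γ0 hγ0
    rw [hwval, hwval] at this
    nlinarith
  have hTeq : T = Set.Icc (0:ℝ) 1 ∩
      ⋂ γ ∈ f.support, {t | expDot α (w t) ≤ expDot γ (w t)} := by
    ext t
    simp [hT, Set.mem_iInter]
  have hTclosed : IsClosed T := by
    rw [hTeq]
    exact isClosed_Icc.inter
      (isClosed_biInter fun γ _ => isClosed_le (hcont α) (hcont γ))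
  have hTcpt : IsCompact T :=
    IsCompact.of_isClosed_subset isCompact_Icc hTclosed fun t ht => ht.1
  have hTne : T.Nonempty := ⟨0, h0T⟩
  have hTbdd : BddAbove T := ⟨1, fun t ht => ht.1.2⟩
  set s := sSup T with hs
  have hsT : s ∈ T := hTcpt.sSup_mem hTne
  have hs1 : s < 1 := lt_of_le_of_ne hsT.1.2 (fun h => h1T (h ▸ hsT))
  -- every t ∈ (s,1] lies in the union of the closed sets D_γ
  have hsub : Set.Ioc s 1 ⊆
      ⋃ γ ∈ f.support.erase α, {t | expDot γ (w t) ≤ expDot α (w t)} := by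
    intro t ht
    have htT : t ∉ T := fun hmem => absurd (le_csSup hTbdd hmem) (not_le.2 ht.1)
    have ht01 : t ∈ Set.Icc (0:ℝ) 1 := ⟨le_trans hsT.1.1 ht.1.le, ht.2⟩
    have : ¬ ∀ γ ∈ f.support, expDot α (w t) ≤ expDot γ (w t) := by
      intro hall; exact htT ⟨ht01, hall⟩
    push_neg at this
    obtain ⟨γ, hγ, hγlt⟩ := this
    have hne : γ ≠ α := by
      intro h; rw [h] at hγlt; exact lt_irrefl _ hγlt
    exact Set.mem_biUnion (Finset.mem_erase.2 ⟨hne, hγ⟩) hγlt.le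
  have hUclosed : IsClosed
      (⋃ γ ∈ f.support.erase α, {t | expDot γ (w t) ≤ expDot α (w t)}) := by
    apply Set.Finite.isClosed_biUnion (f.support.erase α).finite_toSet
    intro γ _
    exact isClosed_le (hcont γ) (hcont α)
  have hsmem : s ∈ ⋃ γ ∈ f.support.erase α, {t | expDot γ (w t) ≤ expDot α (w t)} := by
    have h1 : s ∈ closure (Set.Ioc s 1) := by
      rw [closure_Ioc hs1.ne]
      exact ⟨le_refl _, hs1.le⟩
    have h2 := closure_mono hsub h1
    rwa [hUclosed.closure_eq] at h2
  obtain ⟨γ, hγmem, hγle⟩ := Set.mem_iUnion₂.1 hsmem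
  have hγS : γ ∈ f.support := Finset.mem_of_mem_erase hγmem
  have hne : α ≠ γ := (Finset.ne_of_mem_erase hγmem).symm
  have heq : expDot α (w s) = expDot γ (w s) := le_antisymm (hsT.2 γ hγS) hγle
  have hws : w s ∈ tropHypersurface f := ⟨α, hα, γ, hγS, hne, heq, hsT.2⟩
  have hℓws : ℓ (w s) = 0 := htrop _ hws
  have hℓval : ℓ (w s) = ℓ u + s * (ℓ v - ℓ u) := by
    simp [hw, map_add, map_smul, map_sub, smul_eq_mul]
  have hs0 : 0 ≤ s := hsT.1.1
  nlinarith

theorem tropHypersurface_spans (N : ℕ) (f : MvPolynomial (Fin N) ℂ)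
    (hirr : Irreducible f)
    (hnotline : ∃ αi ∈ f.support, ∃ αj ∈ f.support, ∃ αk ∈ f.support,
      LinearIndependent ℝ
        ![(fun i => (αi i : ℝ) - (αj i : ℝ)), (fun i => (αi i : ℝ) - (αk i : ℝ))]) :
    Submodule.span ℝ (tropHypersurface f) = ⊤ := by
  obtain ⟨αi, hi, αj, hj, αk, hk, hli⟩ := hnotline
  by_contra hne
  obtain ⟨ℓ, hℓne, hℓmap⟩ :=
    Submodule.exists_dual_map_eq_bot_of_lt_top
      (lt_top_iff_ne_top.2 hne) inferInstance
  have htrop : ∀ x ∈ tropHypersurface f, ℓ x = 0 := by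
    intro x hx
    have hxspan : x ∈ Submodule.span ℝ (tropHypersurface f) := Submodule.subset_span hx
    have : ℓ x ∈ (Submodule.span ℝ (tropHypersurface f)).map ℓ :=
      Submodule.mem_map_of_mem hxspan
    rwa [hℓmap, Submodule.mem_bot] at this
  -- a point in the open half-space
  obtain ⟨x, hx⟩ : ∃ x, ℓ x ≠ 0 := by
    by_contra h
    push_neg at h
    exact hℓne (LinearMap.ext fun x => h x)
  obtain ⟨u₀, hu₀⟩ : ∃ u₀, 0 < ℓ u₀ := by
    rcases lt_or_gt_of_ne hx with h | h
    · exact ⟨-x, by simpa using neg_pos.2 h⟩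
    · exact ⟨x, h⟩
  -- minimizer over the support at u₀
  obtain ⟨α, hαS, hαmin⟩ :=
    f.support.exists_min_image (fun γ => expDot γ u₀) ⟨αi, hi⟩
  -- α minimizes on the whole open half-space
  have hopen : ∀ v, 0 < ℓ v → ∀ γ ∈ f.support, expDot α v ≤ expDot γ v :=
    fun v hv => minimizer_const f ℓ htrop hu₀ hv hαS hαmin
  -- α minimizes on the closed half-space
  have hclosed : ∀ v, 0 ≤ ℓ v → ∀ γ ∈ f.support, expDot α v ≤ expDot γ v := by
    intro v hv γ hγ
    rcases eq_or_lt_of_le hv with hv0 | hv0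
    · -- limit argument: v + ε • u₀
      have key : ∀ ε : ℝ, 0 < ε →
          expDot α v + ε * expDot α u₀ ≤ expDot γ v + ε * expDot γ u₀ := by
        intro ε hε
        have hpos : 0 < ℓ (v + ε • u₀) := by
          rw [map_add, map_smul, ← hv0, smul_eq_mul]
          positivity
        have := hopen (v + ε • u₀) hpos γ hγ
        rwa [expDot_add, expDot_add, expDot_smul, expDot_smul] at this
      have hd : 0 ≤ expDot γ u₀ - expDot α u₀ :=
        sub_nonneg.2 (hopen u₀ hu₀ γ hγ)
      by_contra hcon
      push_neg at hcon
      set p := expDot α v - expDot γ v with hp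
      have hppos : 0 < p := sub_pos.2 hcon
      set d := expDot γ u₀ - expDot α u₀ with hdd
      rcases hd.eq_or_lt with hd0 | hd0
      · have h1 := key 1 one_pos
        nlinarith
      · have h1 := key (p / (2 * d)) (by positivity)
        have h2 : p / (2 * d) * d = p / 2 := by
          field_simp
        nlinarith
    · exact hopen v hv0 γ hγ
  -- on the kernel of ℓ all exponents pair equally with α
  have hker : ∀ v, ℓ v = 0 → ∀ γ ∈ f.support, expDot γ v = expDot α v := by
    intro v hv γ hγ
    have h1 := hclosed v hv.symm.le γ hγ
    have h2 := hclosed (-v) (by simp [hv]) γ hγ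
    have h3 : expDot α (-v) = - expDot α v := by
      simpa using expDot_smul α (-1) v
    have h4 : expDot γ (-v) = - expDot γ v := by
      simpa using expDot_smul γ (-1) v
    rw [h3, h4] at h2
    linarith
  -- normalize: x0 with ℓ x0 = 1
  obtain ⟨x0, hℓx0⟩ : ∃ x0, ℓ x0 = 1 :=
    ⟨(ℓ u₀)⁻¹ • u₀, by rw [map_smul, smul_eq_mul, inv_mul_cancel₀ hu₀.ne']⟩
  have hfactor : ∀ γ ∈ f.support, ∀ u,
      expDot γ u - expDot α u = (expDot γ x0 - expDot α x0) * ℓ u := by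
    intro γ hγ u
    have hw : ℓ (u - ℓ u • x0) = 0 := by
      rw [map_sub, map_smul, smul_eq_mul, hℓx0, mul_one, sub_self]
    have := hker _ hw γ hγ
    rw [expDot_sub, expDot_sub, expDot_smul, expDot_smul] at this
    nlinarith [this]
  set a := expDot αi x0 - expDot αj x0 with ha
  set b := expDot αi x0 - expDot αk x0 with hb
  have hij : ∀ u, expDot αi u - expDot αj u = a * ℓ u := by
    intro u
    have h1 := hfactor αi hi u
    have h2 := hfactor αj hj u
    rw [ha]; linarith [h1, h2]
  have hik : ∀ u, expDot αi u - expDot αk u = b * ℓ u := by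
    intro u
    have h1 := hfactor αi hi u
    have h2 := hfactor αk hk u
    rw [hb]; linarith [h1, h2]
  set vij : Fin N → ℝ := fun i => (αi i : ℝ) - (αj i : ℝ) with hvij
  set vik : Fin N → ℝ := fun i => (αi i : ℝ) - (αk i : ℝ) with hvik
  have hvijval : ∀ i, vij i = a * ℓ (Pi.single i 1) := by
    intro i
    have := hij (Pi.single i 1)
    rwa [expDot_single, expDot_single] at this
  have hvikval : ∀ i, vik i = b * ℓ (Pi.single i 1) := by
    intro i
    have := hik (Pi.single i 1)
    rwa [expDot_single, expDot_single] at this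
  have hdep : b • vij + (-a) • vik = 0 := by
    funext i
    simp only [Pi.add_apply, Pi.smul_apply, smul_eq_mul, Pi.zero_apply,
      hvijval i, hvikval i]
    ring
  have hab := LinearIndependent.pair_iff.1 hli b (-a) hdep
  have ha0 : a = 0 := by have := hab.2; linarith
  have hvij0 : vij = 0 := by
    funext i
    rw [hvijval i, ha0, zero_mul]; rfl
  have := hli.ne_zero 0
  simp only [Matrix.cons_val_zero] at this
  exact this hvij0
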